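/- Let ω < 0 and 0 < α ≤ 1. For every s ∈ ℂ with Arg(s) ∈ (0, π/2], one has 0 < Arg(s^α − ω) < Arg(s^α) = α·Arg(s), where s^α denotes the principal-branch complex power. -/

import Mathlib

open Real Complex Filter Set Topology

/-- The curve parametrization Λ(θ) bounding the stability region. -/
noncomputable def Lam (α β γ ω : ℝ) (θ : ℝ) : ℂ :=
  ((|ω| ^ (β / α) * Real.sin θ ^ (β / α - γ) * Real.sin (α * π / 2) ^ γ *
      Real.sin (α * π / 2 - θ) ^ (-(β / α)) : ℝ) : ℂ) *
    Complex.exp (Complex.I * ((γ * θ + (β - α * γ) * π / 2 : ℝ) : ℂ))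

/-- The characteristic function F(s) = s^(β-αγ) (s^α - ω)^γ (principal branches). -/
noncomputable def Fc (α β γ ω : ℝ) (s : ℂ) : ℂ :=
  s ^ ((β - α * γ : ℝ) : ℂ) * (s ^ ((α : ℝ) : ℂ) - (ω : ℂ)) ^ ((γ : ℝ) : ℂ)

/-- μ(θ) = (|ω| sin θ / sin(απ/2 - θ))^(1/α). -/
noncomputable def muP (α ω : ℝ) (θ : ℝ) : ℝ :=
  (|ω| * Real.sin θ / Real.sin (α * π / 2 - θ)) ^ (1 / α)

/-- ρ(θ) = |ω| sin(απ/2) / sin(απ/2 - θ). -/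
noncomputable def rhoP (α ω : ℝ) (θ : ℝ) : ℝ :=
  |ω| * Real.sin (α * π / 2) / Real.sin (α * π / 2 - θ)

theorem arg_cpow_real_of_arg {s : ℂ} {α : ℝ} (hα0 : 0 < α) (hα1 : α ≤ 1)
    (h1 : 0 < s.arg) (h2 : s.arg ≤ π / 2) :
    (s ^ ((α : ℝ) : ℂ)) = ((‖s‖ ^ α : ℝ) : ℂ) *
      (Complex.cos (α * s.arg) + Complex.sin (α * s.arg) * Complex.I) ∧
    (s ^ ((α : ℝ) : ℂ)).arg = α * s.arg := by
  have hs0 : s ≠ 0 := by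
    intro h; rw [h, Complex.arg_zero] at h1; exact lt_irrefl 0 h1
  have habs : 0 < ‖s‖ := norm_pos_iff.mpr hs0
  have hz : (s ^ ((α : ℝ) : ℂ)) = ((‖s‖ ^ α : ℝ) : ℂ) *
      (Complex.cos (α * s.arg) + Complex.sin (α * s.arg) * Complex.I) := by
    rw [Complex.cpow_def_of_ne_zero hs0, Complex.log]
    rw [Real.rpow_def_of_pos habs]
    have : (↑(Real.log (‖s‖)) + ↑s.arg * Complex.I) * ↑α
        = ((Real.log (‖s‖) * α : ℝ) : ℂ) + ((α * s.arg : ℝ) : ℂ) * Complex.I := by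
      push_cast; ring
    rw [this, Complex.exp_add, Complex.exp_mul_I]
    norm_cast
  refine ⟨hz, ?_⟩
  rw [hz]
  have := Complex.arg_mul_cos_add_sin_mul_I
    (r := ‖s‖ ^ α) (Real.rpow_pos_of_pos habs α) (θ := α * s.arg) ?_
  · convert this using 3 <;> push_cast <;> ring
  · constructor
    · nlinarith [Real.pi_pos, mul_pos hα0 h1]
    · nlinarith [Real.pi_pos, mul_pos hα0 h1]

theorem arg_cpow_sub_omega (α ω : ℝ) (hω : ω < 0) (hα0 : 0 < α) (hα1 : α ≤ 1) :
    ∀ s : ℂ, 0 < s.arg → s.arg ≤ π / 2 →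
      0 < (s ^ ((α : ℝ) : ℂ) - (ω : ℂ)).arg ∧
      (s ^ ((α : ℝ) : ℂ) - (ω : ℂ)).arg < (s ^ ((α : ℝ) : ℂ)).arg ∧
      (s ^ ((α : ℝ) : ℂ)).arg = α * s.arg := by
  intro s h1 h2
  obtain ⟨hz, harg⟩ := arg_cpow_real_of_arg hα0 hα1 h1 h2
  have hs0 : s ≠ 0 := by
    intro h; rw [h, Complex.arg_zero] at h1; exact lt_irrefl 0 h1
  set θ := α * s.arg with hθdef
  set r := ‖s‖ ^ α with hrdef
  have hr : 0 < r := Real.rpow_pos_of_pos (norm_pos_iff.mpr hs0) α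
  have hθ0 : 0 < θ := mul_pos hα0 h1
  have hθπ2 : θ ≤ π / 2 := by
    calc θ ≤ 1 * (π / 2) := by
            apply mul_le_mul hα1 h2 h1.le zero_le_one
      _ = π / 2 := one_mul _
  have hsin : 0 < Real.sin θ := Real.sin_pos_of_pos_of_lt_pi hθ0
    (lt_of_le_of_lt hθπ2 (by linarith [Real.pi_pos]))
  have hcos : 0 ≤ Real.cos θ := Real.cos_nonneg_of_mem_Icc ⟨by linarith, hθπ2⟩
  set w := s ^ ((α : ℝ) : ℂ) - (ω : ℂ) with hwdef
  have hz' : s ^ ((α : ℝ) : ℂ) = ((r : ℝ) : ℂ) *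
      (Complex.cos ((θ : ℝ) : ℂ) + Complex.sin ((θ : ℝ) : ℂ) * Complex.I) := by
    rw [hz]; norm_cast
  have hwre : w.re = r * Real.cos θ - ω := by
    rw [hwdef, hz']
    simp [Complex.cos_ofReal_re, Complex.sin_ofReal_re]
  have hwim : w.im = r * Real.sin θ := by
    rw [hwdef, hz']
    simp [Complex.cos_ofReal_re, Complex.sin_ofReal_re]
  have hwre_pos : 0 < w.re := by
    rw [hwre]; nlinarith
  have hwim_pos : 0 < w.im := by
    rw [hwim]; positivity
  have hargw_pos : 0 < w.arg := by
    rcases lt_or_eq_of_le (Complex.arg_nonneg_iff.mpr hwim_pos.le) with h | h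
    · exact h
    · exact absurd (Complex.arg_eq_zero_iff.mp h.symm).2 hwim_pos.ne'
  have hargw_lt : w.arg < π / 2 := by
    rcases lt_or_eq_of_le (Complex.arg_le_pi_div_two_iff.mpr (Or.inl hwre_pos.le)) with h | h
    · exact h
    · exact absurd (Complex.arg_eq_pi_div_two_iff.mp h).1 hwre_pos.ne'
  refine ⟨hargw_pos, ?_, harg⟩
  rw [harg]
  rcases eq_or_lt_of_le hθπ2 with hθeq | hθlt
  · rw [← hθeq] at hargw_lt; exact hargw_lt
  · -- re z > 0 case: compare tangents
    have hcos' : 0 < Real.cos θ := Real.cos_pos_of_mem_Ioo ⟨by linarith, hθlt⟩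
    have htanw : Real.tan w.arg = w.im / w.re := Complex.tan_arg w
    have hlt : Real.tan w.arg < Real.tan θ := by
      rw [htanw, Real.tan_eq_sin_div_cos, hwim, hwre]
      rw [div_lt_div_iff₀ (by nlinarith : (0:ℝ) < r * Real.cos θ - ω) hcos']
      nlinarith
    have hmem1 : w.arg ∈ Set.Ioo (-(π/2)) (π/2) := ⟨by linarith, hargw_lt⟩
    have hmem2 : θ ∈ Set.Ioo (-(π/2)) (π/2) := ⟨by linarith, hθlt⟩
    exact (Real.strictMonoOn_tan.lt_iff_lt hmem1 hmem2).mp hlt
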